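/- arXiv:1111.2657 — 4 statements merged into one kernel-verified Lean document; each statement's English description precedes it below -/
import Mathlib

section
/- Let μ ≥ 0 and λ be real numbers with μ + λ ≥ 0, let r > 1 be real, and let u : ℝ³ → ℝ³ be differentiable at a point x with u(x) ≠ 0. Write a = |u(x)|, D = div(u/|u|)(x), g = ∇|u|(x), and s = u(x)·g. Then μ a² |∇u(x)|² + (λ+μ) a² (div u(x))² + μ(r−2) a² |g|² + (r−2)(μ+λ) a² s D + (r−2)(μ+λ) s² ≥ (4μ/3 + λ − r²(μ+λ)/(4(r−1))) a⁴ D² + μ(r−1) a² |g|². -/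
open scoped RealInnerProductSpace

noncomputable section

/-- ℝ³ as a Euclidean space. -/
abbrev E3 : Type := EuclideanSpace ℝ (Fin 3)

/-- The (i,j) entry of the Jacobian matrix ∇u(x) of a map u : ℝ³ → ℝ³. -/
def jacEntry (u : E3 → E3) (x : E3) (i j : Fin 3) : ℝ :=
  fderiv ℝ u x (EuclideanSpace.single j 1) i

/-- The squared Frobenius (Hilbert–Schmidt) norm |∇u(x)|² of the Jacobian of u at x. -/
def frobSq (u : E3 → E3) (x : E3) : ℝ :=
  ∑ i, ∑ j, (jacEntry u x i j) ^ 2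

/-- The divergence div u(x) = tr(∇u(x)). -/
def divg (u : E3 → E3) (x : E3) : ℝ :=
  ∑ i, jacEntry u x i i

set_option maxHeartbeats 2000000

lemma lemA (a v0 v1 v2 h0 h1 h2 m00 m01 m02 m10 m11 m12 m20 m21 m22 : ℝ)
    (ha2 : v0^2 + v1^2 + v2^2 = a^2)
    (hh0 : h0 = v0*m00 + v1*m10 + v2*m20)
    (hh1 : h1 = v0*m01 + v1*m11 + v2*m21)
    (hh2 : h2 = v0*m02 + v1*m12 + v2*m22) :
    (a^2*(m00 + m11 + m22) - (v0*h0 + v1*h1 + v2*h2))^2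
      ≤ 3*(a^4*(m00^2+m01^2+m02^2+m10^2+m11^2+m12^2+m20^2+m21^2+m22^2)
            - a^2*(h0^2+h1^2+h2^2)) := by
  subst hh0 hh1 hh2
  have key : 3*(a^4*(m00^2+m01^2+m02^2+m10^2+m11^2+m12^2+m20^2+m21^2+m22^2)
        - a^2*(((v0*m00 + v1*m10 + v2*m20))^2+((v0*m01 + v1*m11 + v2*m21))^2+((v0*m02 + v1*m12 + v2*m22))^2))
      - (a^2*(m00 + m11 + m22) - (v0*(v0*m00 + v1*m10 + v2*m20) + v1*(v0*m01 + v1*m11 + v2*m21) + v2*(v0*m02 + v1*m12 + v2*m22)))^2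
      = ((a^2*m00 - v0*(v0*m00 + v1*m10 + v2*m20)) - (a^2*m11 - v1*(v0*m01 + v1*m11 + v2*m21)))^2
      + ((a^2*m11 - v1*(v0*m01 + v1*m11 + v2*m21)) - (a^2*m22 - v2*(v0*m02 + v1*m12 + v2*m22)))^2
      + ((a^2*m00 - v0*(v0*m00 + v1*m10 + v2*m20)) - (a^2*m22 - v2*(v0*m02 + v1*m12 + v2*m22)))^2
      + 3*((a^2*m01 - v0*(v0*m01 + v1*m11 + v2*m21))^2
        + (a^2*m02 - v0*(v0*m02 + v1*m12 + v2*m22))^2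
        + (a^2*m10 - v1*(v0*m00 + v1*m10 + v2*m20))^2
        + (a^2*m12 - v1*(v0*m02 + v1*m12 + v2*m22))^2
        + (a^2*m20 - v2*(v0*m00 + v1*m10 + v2*m20))^2
        + (a^2*m21 - v2*(v0*m01 + v1*m11 + v2*m21))^2) := by
    linear_combination (-3*((v0*m00 + v1*m10 + v2*m20)^2 + (v0*m01 + v1*m11 + v2*m21)^2
      + (v0*m02 + v1*m12 + v2*m22)^2)) * ha2
  linarith [key, sq_nonneg ((a^2*m00 - v0*(v0*m00 + v1*m10 + v2*m20)) - (a^2*m11 - v1*(v0*m01 + v1*m11 + v2*m21))),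
    sq_nonneg ((a^2*m11 - v1*(v0*m01 + v1*m11 + v2*m21)) - (a^2*m22 - v2*(v0*m02 + v1*m12 + v2*m22))),
    sq_nonneg ((a^2*m00 - v0*(v0*m00 + v1*m10 + v2*m20)) - (a^2*m22 - v2*(v0*m02 + v1*m12 + v2*m22))),
    sq_nonneg (a^2*m01 - v0*(v0*m01 + v1*m11 + v2*m21)),
    sq_nonneg (a^2*m02 - v0*(v0*m02 + v1*m12 + v2*m22)),
    sq_nonneg (a^2*m10 - v1*(v0*m00 + v1*m10 + v2*m20)),
    sq_nonneg (a^2*m12 - v1*(v0*m02 + v1*m12 + v2*m22)),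
    sq_nonneg (a^2*m20 - v2*(v0*m00 + v1*m10 + v2*m20)),
    sq_nonneg (a^2*m21 - v2*(v0*m01 + v1*m11 + v2*m21))]

lemma lemB (μ lam r a F T G2 s D : ℝ) (hμ : 0 ≤ μ) (hμlam : 0 ≤ μ + lam)
    (hr : 1 < r) (ha : 0 < a)
    (hD : a^2*D = a*T - s) (hkey : a^2*D^2/3 + G2 ≤ F) :
    (4*μ/3 + lam - r^2*(μ+lam)/(4*(r-1)))*a^4*D^2 + μ*(r-1)*a^2*G2
      ≤ μ*a^2*F + (lam+μ)*a^2*T^2 + μ*(r-2)*a^2*G2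
        + (r-2)*(μ+lam)*a^2*s*D + (r-2)*(μ+lam)*s^2 := by
  have hr1 : (0:ℝ) < r - 1 := by linarith
  have hc : r^2*(μ+lam)/(4*(r-1)) * (4*(r-1)) = r^2*(μ+lam) := by
    field_simp
  have h1 : 0 ≤ μ*a^2*(F - a^2*D^2/3 - G2) := by
    apply mul_nonneg (by positivity); linarith
  have h2 : 0 ≤ (μ+lam)*(2*(r-1)*s + r*a^2*D)^2 := mul_nonneg hμlam (sq_nonneg _)
  have key : 4*(r-1)*((μ*a^2*F + (lam+μ)*a^2*T^2 + μ*(r-2)*a^2*G2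
        + (r-2)*(μ+lam)*a^2*s*D + (r-2)*(μ+lam)*s^2)
      - ((4*μ/3 + lam - r^2*(μ+lam)/(4*(r-1)))*a^4*D^2 + μ*(r-1)*a^2*G2))
      = 4*(r-1)*(μ*a^2*(F - a^2*D^2/3 - G2)) + (μ+lam)*(2*(r-1)*s + r*a^2*D)^2 := by
    linear_combination (-4*(r-1)*(μ+lam)*(a*T + a^2*D + s))*hD + (a^4*D^2)*hc
  nlinarith [key, h1, h2, hr1]

/-- Pointwise lower bound for the quadratic form G in the weighted energy estimate:
for μ ≥ 0, μ + λ ≥ 0, r > 1, and u differentiable at x with u(x) ≠ 0, writing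
a = |u(x)|, D = div(u/|u|)(x), g = ∇|u|(x), s = u(x)·g, one has
μ a² |∇u(x)|² + (λ+μ) a² (div u(x))² + μ(r−2) a² |g|² + (r−2)(μ+λ) a² s D
+ (r−2)(μ+λ) s² ≥ (4μ/3 + λ − r²(μ+λ)/(4(r−1))) a⁴ D² + μ(r−1) a² |g|². -/
theorem quadratic_form_lower_bound (μ lam r : ℝ) (hμ : 0 ≤ μ) (hμlam : 0 ≤ μ + lam)
    (hr : 1 < r) (u : E3 → E3) (x : E3)
    (hu : DifferentiableAt ℝ u x) (hx : u x ≠ 0) :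
    μ * ‖u x‖ ^ 2 * frobSq u x
      + (lam + μ) * ‖u x‖ ^ 2 * (divg u x) ^ 2
      + μ * (r - 2) * ‖u x‖ ^ 2 * ‖gradient (fun y => ‖u y‖) x‖ ^ 2
      + (r - 2) * (μ + lam) * ‖u x‖ ^ 2
          * ⟪u x, gradient (fun y => ‖u y‖) x⟫
          * divg (fun y => ‖u y‖⁻¹ • u y) x
      + (r - 2) * (μ + lam) * ⟪u x, gradient (fun y => ‖u y‖) x⟫ ^ 2
      ≥ (4 * μ / 3 + lam - r ^ 2 * (μ + lam) / (4 * (r - 1))) * ‖u x‖ ^ 4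
          * (divg (fun y => ‖u y‖⁻¹ • u y) x) ^ 2
        + μ * (r - 1) * ‖u x‖ ^ 2 * ‖gradient (fun y => ‖u y‖) x‖ ^ 2 := by
  have ha : (0:ℝ) < ‖u x‖ := norm_pos_iff.mpr hx
  set φ := fderiv ℝ u x with hφdef
  have hφ : HasFDerivAt u φ x := hu.hasFDerivAt
  have hns : ‖u x‖ ^ 2 ≠ 0 := by positivity
  have hnorm : HasFDerivAt (fun y => ‖u y‖) (‖u x‖⁻¹ • ((innerSL ℝ (u x)).comp φ)) x := by
    have h1 := (hφ.norm_sq).sqrt hns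
    have h2 : (fun y => Real.sqrt (‖u y‖ ^ 2)) = fun y => ‖u y‖ :=
      funext fun y => Real.sqrt_sq (norm_nonneg _)
    rw [h2] at h1
    refine h1.congr_fderiv ?_
    rw [Real.sqrt_sq (norm_nonneg _)]
    ext v
    simp only [ContinuousLinearMap.smul_apply, smul_eq_mul, ContinuousLinearMap.coe_smul',
      Pi.smul_apply, nsmul_eq_mul, Nat.cast_ofNat]
    field_simp
  have hgrad : ∀ v : E3, ⟪gradient (fun y => ‖u y‖) x, v⟫ = ‖u x‖⁻¹ * ⟪u x, φ v⟫ := by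
    intro v
    unfold gradient
    rw [hnorm.fderiv, InnerProductSpace.toDual_symm_apply]
    simp [innerSL_apply_apply]
  set G := gradient (fun y => ‖u y‖) x with hGdef
  set m : Fin 3 → Fin 3 → ℝ := fun i j => φ (EuclideanSpace.single j 1) i with hm
  set h : Fin 3 → ℝ := fun j => ⟪u x, φ (EuclideanSpace.single j 1)⟫ with hh
  have hj_expand : ∀ j, h j = u x 0 * m 0 j + u x 1 * m 1 j + u x 2 * m 2 j := by
    intro j
    simp [hh, hm, PiLp.inner_apply, RCLike.inner_apply, conj_trivial, Fin.sum_univ_three]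
    ring
  have hGc : ∀ i, G i = ‖u x‖⁻¹ * h i := by
    intro i
    have := hgrad (EuclideanSpace.single i 1)
    rwa [EuclideanSpace.inner_single_right, conj_trivial, one_mul] at this
  have hG2 : ‖G‖ ^ 2 = (‖u x‖⁻¹ * h 0)^2 + (‖u x‖⁻¹ * h 1)^2 + (‖u x‖⁻¹ * h 2)^2 := by
    rw [← real_inner_self_eq_norm_sq, PiLp.inner_apply]
    simp [RCLike.inner_apply, conj_trivial, sq, Fin.sum_univ_three, hGc]
    ring_nf; simp [sq_abs]
  have hsG : ⟪u x, G⟫ = u x 0 * (‖u x‖⁻¹ * h 0) + u x 1 * (‖u x‖⁻¹ * h 1)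
      + u x 2 * (‖u x‖⁻¹ * h 2) := by
    simp [PiLp.inner_apply, RCLike.inner_apply, conj_trivial, Fin.sum_univ_three, hGc]
    ring
  have ha2 : (u x 0)^2 + (u x 1)^2 + (u x 2)^2 = ‖u x‖^2 := by
    rw [← real_inner_self_eq_norm_sq, PiLp.inner_apply]
    simp [RCLike.inner_apply, conj_trivial, sq, Fin.sum_univ_three]
  have hF : frobSq u x = m 0 0^2 + m 0 1^2 + m 0 2^2 + m 1 0^2 + m 1 1^2 + m 1 2^2
      + m 2 0^2 + m 2 1^2 + m 2 2^2 := by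
    simp [frobSq, jacEntry, hm, hφ.fderiv, Fin.sum_univ_three]
    ring
  have hT : divg u x = m 0 0 + m 1 1 + m 2 2 := by
    simp [divg, jacEntry, hm, hφ.fderiv, Fin.sum_univ_three]
  have hinv : HasFDerivAt (fun y => ‖u y‖⁻¹)
      ((-(‖u x‖^2)⁻¹) • (‖u x‖⁻¹ • ((innerSL ℝ (u x)).comp φ))) x :=
    (hasDerivAt_inv (ne_of_gt ha)).comp_hasFDerivAt x hnorm
  have hw : HasFDerivAt (fun y => ‖u y‖⁻¹ • u y)
      (‖u x‖⁻¹ • φ + ((-(‖u x‖^2)⁻¹) • (‖u x‖⁻¹ • ((innerSL ℝ (u x)).comp φ))).smulRight (u x)) x :=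
    hinv.smul hφ
  have hDval : divg (fun y => ‖u y‖⁻¹ • u y) x
      = (‖u x‖⁻¹ * m 0 0 + (-(‖u x‖^2)⁻¹ * (‖u x‖⁻¹ * h 0)) * u x 0)
      + (‖u x‖⁻¹ * m 1 1 + (-(‖u x‖^2)⁻¹ * (‖u x‖⁻¹ * h 1)) * u x 1)
      + (‖u x‖⁻¹ * m 2 2 + (-(‖u x‖^2)⁻¹ * (‖u x‖⁻¹ * h 2)) * u x 2) := by
    simp [divg, jacEntry, hw.fderiv, hm, hh, ContinuousLinearMap.add_apply,
      ContinuousLinearMap.smulRight_apply, ContinuousLinearMap.smul_apply,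
      PiLp.add_apply, PiLp.smul_apply, smul_eq_mul, innerSL_apply_apply, Fin.sum_univ_three]

  -- abbreviations
  have hane : ‖u x‖ ≠ 0 := ne_of_gt ha
  have hD : ‖u x‖^2 * divg (fun y => ‖u y‖⁻¹ • u y) x = ‖u x‖ * divg u x - ⟪u x, G⟫ := by
    rw [hDval, hT, hsG]
    field_simp
    ring
  have ineq1 : (‖u x‖^2 * divg u x - (u x 0 * h 0 + u x 1 * h 1 + u x 2 * h 2))^2
      ≤ 3*(‖u x‖^4 * frobSq u x - ‖u x‖^2*(h 0^2 + h 1^2 + h 2^2)) := by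
    rw [hF, hT]
    linarith [lemA ‖u x‖ (u x 0) (u x 1) (u x 2) (h 0) (h 1) (h 2)
      (m 0 0) (m 0 1) (m 0 2) (m 1 0) (m 1 1) (m 1 2) (m 2 0) (m 2 1) (m 2 2)
      ha2 (hj_expand 0) (hj_expand 1) (hj_expand 2)]
  have e2 : ‖u x‖ * ⟪u x, G⟫ = u x 0 * h 0 + u x 1 * h 1 + u x 2 * h 2 := by
    rw [hsG]; field_simp
  have e3 : ‖u x‖^2 * ‖G‖^2 = h 0^2 + h 1^2 + h 2^2 := by
    rw [hG2]; field_simp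
  have h4 : 3*‖u x‖^4*(frobSq u x - ‖u x‖^2*(divg (fun y => ‖u y‖⁻¹ • u y) x)^2/3 - ‖G‖^2)
      = 3*(‖u x‖^4 * frobSq u x - ‖u x‖^2*(h 0^2 + h 1^2 + h 2^2))
        - (‖u x‖^2 * divg u x - (u x 0 * h 0 + u x 1 * h 1 + u x 2 * h 2))^2 := by
    linear_combination (-(‖u x‖^2)*(‖u x‖^2 * divg (fun y => ‖u y‖⁻¹ • u y) x
        + ‖u x‖ * divg u x - ⟪u x, G⟫))*hD
      + (2*‖u x‖^2*divg u x - ‖u x‖*⟪u x, G⟫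
        - (u x 0 * h 0 + u x 1 * h 1 + u x 2 * h 2))*e2
      + (-3*‖u x‖^2)*e3
  have hkey : ‖u x‖^2*(divg (fun y => ‖u y‖⁻¹ • u y) x)^2/3 + ‖G‖^2 ≤ frobSq u x := by
    nlinarith [h4, ineq1, pow_pos ha 4]
  rw [ge_iff_le]
  exact lemB μ lam r ‖u x‖ (frobSq u x) (divg u x) (‖G‖^2) (⟪u x, G⟫)
    (divg (fun y => ‖u y‖⁻¹ • u y) x) hμ hμlam hr ha hD hkey

end
end

section
/- Let μ, λ, r be real numbers with r > 1, and let u : ℝ³ → ℝ³ be differentiable at a point x with u(x) ≠ 0. Write a = |u(x)|, D = div(u/|u|)(x), g = ∇|u|(x), and s = u(x)·g. Then μ a² |∇u(x)|² + (λ+μ) a² (div u(x))² + μ(r−2) a² |g|² + (r−2)(μ+λ) a² s D + (r−2)(μ+λ) s² = μ a⁴ |∇(u/|u|)(x)|² + μ(r−1) a² |g|² + (r−1)(μ+λ) (s + (r/(2(r−1))) a² D)² + (μ+λ)(1 − r²/(4(r−1))) a⁴ D². -/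
open scoped RealInnerProductSpace

noncomputable section

/-- Algebraic decomposition of the quadratic form G in the weighted energy estimate:
for r > 1 and u differentiable at x with u(x) ≠ 0, writing
a = |u(x)|, D = div(u/|u|)(x), g = ∇|u|(x), s = u(x)·g, one has
μ a² |∇u(x)|² + (λ+μ) a² (div u(x))² + μ(r−2) a² |g|² + (r−2)(μ+λ) a² s D + (r−2)(μ+λ) s²
= μ a⁴ |∇(u/|u|)(x)|² + μ(r−1) a² |g|² + (r−1)(μ+λ) (s + (r/(2(r−1))) a² D)²
  + (μ+λ)(1 − r²/(4(r−1))) a⁴ D². -/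
theorem quadratic_form_decomposition (μ lam r : ℝ) (hr : 1 < r)
    (u : E3 → E3) (x : E3)
    (hu : DifferentiableAt ℝ u x) (hx : u x ≠ 0) :
    μ * ‖u x‖ ^ 2 * frobSq u x
      + (lam + μ) * ‖u x‖ ^ 2 * (divg u x) ^ 2
      + μ * (r - 2) * ‖u x‖ ^ 2 * ‖gradient (fun y => ‖u y‖) x‖ ^ 2
      + (r - 2) * (μ + lam) * ‖u x‖ ^ 2
          * ⟪u x, gradient (fun y => ‖u y‖) x⟫
          * divg (fun y => ‖u y‖⁻¹ • u y) x
      + (r - 2) * (μ + lam) * ⟪u x, gradient (fun y => ‖u y‖) x⟫ ^ 2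
      = μ * ‖u x‖ ^ 4 * frobSq (fun y => ‖u y‖⁻¹ • u y) x
        + μ * (r - 1) * ‖u x‖ ^ 2 * ‖gradient (fun y => ‖u y‖) x‖ ^ 2
        + (r - 1) * (μ + lam)
            * (⟪u x, gradient (fun y => ‖u y‖) x⟫
                + (r / (2 * (r - 1))) * ‖u x‖ ^ 2
                    * divg (fun y => ‖u y‖⁻¹ • u y) x) ^ 2
        + (μ + lam) * (1 - r ^ 2 / (4 * (r - 1))) * ‖u x‖ ^ 4
            * (divg (fun y => ‖u y‖⁻¹ • u y) x) ^ 2 := by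
  have ha : ‖u x‖ ≠ 0 := norm_ne_zero_iff.mpr hx
  have hr1 : r - 1 ≠ 0 := sub_ne_zero.mpr hr.ne'
  have hf : DifferentiableAt ℝ (fun y => ‖u y‖) x := hu.norm ℝ hx
  set g : E3 := gradient (fun y => ‖u y‖) x with hgdef
  have hgrad : ∀ v : E3, fderiv ℝ (fun y => ‖u y‖) x v = ⟪g, v⟫ := by
    intro v
    rw [hgdef, gradient, ← InnerProductSpace.toDual_apply_apply,
      (InnerProductSpace.toDual ℝ E3).apply_symm_apply]
  have hgj : ∀ j : Fin 3, fderiv ℝ (fun y => ‖u y‖) x (EuclideanSpace.single j 1) = g j := by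
    intro j
    rw [hgrad, EuclideanSpace.inner_single_right]
    simp
  have hs : ⟪u x, g⟫ = ∑ i, u x i * g i := by
    simp [PiLp.inner_apply]
    exact Finset.sum_congr rfl fun i _ => mul_comm _ _
  have hg2 : ‖g‖ ^ 2 = ∑ j, g j ^ 2 := by
    rw [← real_inner_self_eq_norm_sq]
    simp [PiLp.inner_apply, sq]
    rw [← sq, EuclideanSpace.norm_sq_eq]; simp [sq, Real.norm_eq_abs]
  have hU2 : ∑ i, (u x i) ^ 2 = ‖u x‖ ^ 2 := by
    rw [← real_inner_self_eq_norm_sq]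
    simp [PiLp.inner_apply, sq]
    rw [← sq, EuclideanSpace.norm_sq_eq]; simp [sq, Real.norm_eq_abs]
  have hA : ∀ v : E3, ⟪u x, fderiv ℝ u x v⟫ = ‖u x‖ * fderiv ℝ (fun y => ‖u y‖) x v := by
    intro v
    have h1 : (fun y => (⟪u y, u y⟫ : ℝ)) = fun y => ‖u y‖ * ‖u y‖ := by
      funext y; exact real_inner_self_eq_norm_mul_norm (u y)
    have h2 := fderiv_inner_apply (𝕜 := ℝ) hu hu v
    rw [h1] at h2
    rw [fderiv_fun_mul hf hf] at h2
    simp only [ContinuousLinearMap.add_apply, ContinuousLinearMap.smul_apply, smul_eq_mul] at h2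
    have h3 := real_inner_comm (u x) ((fderiv ℝ u x) v)
    linarith
  have hUJ : ∀ j : Fin 3, ∑ i, u x i * jacEntry u x i j = ‖u x‖ * g j := by
    intro j
    have h1 := hA (EuclideanSpace.single j 1)
    rw [hgj] at h1
    rw [← h1]
    simp [PiLp.inner_apply, jacEntry]
    exact Finset.sum_congr rfl fun i _ => mul_comm _ _
  have hinv : HasFDerivAt (fun y => ‖u y‖⁻¹)
      ((ContinuousLinearMap.smulRight (1 : ℝ →L[ℝ] ℝ) (-(‖u x‖ ^ 2)⁻¹)).comp
        (fderiv ℝ (fun y => ‖u y‖) x)) x :=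
    (hasFDerivAt_inv ha).comp x hf.hasFDerivAt
  have hw : HasFDerivAt (fun y => ‖u y‖⁻¹ • u y)
      (‖u x‖⁻¹ • fderiv ℝ u x +
        (((ContinuousLinearMap.smulRight (1 : ℝ →L[ℝ] ℝ) (-(‖u x‖ ^ 2)⁻¹)).comp
          (fderiv ℝ (fun y => ‖u y‖) x))).smulRight (u x)) x :=
    hinv.smul hu.hasFDerivAt
  have hWentry : ∀ i j, jacEntry (fun y => ‖u y‖⁻¹ • u y) x i j
      = ‖u x‖⁻¹ * jacEntry u x i j - (‖u x‖ ^ 2)⁻¹ * (g j * u x i) := by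
    intro i j
    rw [jacEntry, hw.fderiv]
    simp [jacEntry, ContinuousLinearMap.smulRight_apply, hgj]
    ring
  -- divergence relation
  have hdvg : ‖u x‖ ^ 2 * divg (fun y => ‖u y‖⁻¹ • u y) x
      = ‖u x‖ * divg u x - ⟪u x, g⟫ := by
    simp only [divg, hWentry, hs, Finset.mul_sum, Fin.sum_univ_three]
    field_simp
    ring
  -- Frobenius relation
  have key : ∀ p q : ℝ,
      ‖u x‖ ^ 4 * ((‖u x‖⁻¹ * p - (‖u x‖ ^ 2)⁻¹ * (q)) ^ 2) = (‖u x‖ * p - q) ^ 2 := by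
    intro p q; field_simp
  have hfrob : ‖u x‖ ^ 4 * frobSq (fun y => ‖u y‖⁻¹ • u y) x
      = ‖u x‖ ^ 2 * frobSq u x - ‖u x‖ ^ 2 * ‖g‖ ^ 2 := by
    have h0 := hUJ 0; have h1 := hUJ 1; have h2 := hUJ 2
    simp only [Fin.sum_univ_three] at h0 h1 h2 hU2
    calc ‖u x‖ ^ 4 * frobSq (fun y => ‖u y‖⁻¹ • u y) x
        = ∑ i, ∑ j, ‖u x‖ ^ 4 *
            ((‖u x‖⁻¹ * jacEntry u x i j - (‖u x‖ ^ 2)⁻¹ * (g j * u x i)) ^ 2) := by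
          simp only [frobSq, hWentry, Finset.mul_sum]
      _ = ∑ i, ∑ j, (‖u x‖ * jacEntry u x i j - g j * u x i) ^ 2 :=
          Finset.sum_congr rfl fun i _ => Finset.sum_congr rfl fun j _ => key _ _
      _ = ‖u x‖ ^ 2 * frobSq u x - ‖u x‖ ^ 2 * ‖g‖ ^ 2 := by
          rw [hg2]
          simp only [frobSq, Fin.sum_univ_three]
          linear_combination (-2*‖u x‖*g 0)*h0 + (-2*‖u x‖*g 1)*h1 + (-2*‖u x‖*g 2)*h2
            + (g 0 ^ 2 + g 1 ^ 2 + g 2 ^ 2)*hU2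
  -- eliminate divg u and frobSq w from the goal
  have hdu : divg u x = (‖u x‖ ^ 2 * divg (fun y => ‖u y‖⁻¹ • u y) x + ⟪u x, g⟫) / ‖u x‖ := by
    rw [hdvg]; field_simp; ring
  have hF : frobSq (fun y => ‖u y‖⁻¹ • u y) x
      = (‖u x‖ ^ 2 * frobSq u x - ‖u x‖ ^ 2 * ‖g‖ ^ 2) / ‖u x‖ ^ 4 := by
    rw [← hfrob]; field_simp
  rw [hdu, hF]
  field_simp
  ring

end
end

section
/- Let μ > 0 and λ be real numbers with 5μ/3 < λ < 29μ/3. Then there exist a real number r with 3 < r < 7/2 and real numbers ε₀, ε₁ with 0 < ε₀ < 1 and 0 < ε₁ < 1 such that r²(μ+λ)/(4(r−1)) − 4μ/3 − λ > 0 and μ² ε₁ (1−ε₀)(r−1) / (3(r²(μ+λ)/(4(r−1)) − 4μ/3 − λ)) + μ(r−1) − (r−2)²(μ+λ)/4 > 0. -/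
set_option maxHeartbeats 1000000


/-- For viscosity coefficients μ > 0 and λ with 5μ/3 < λ < 29μ/3, there exist
r ∈ (3, 7/2) and ε₀, ε₁ ∈ (0,1) with r²(μ+λ)/(4(r−1)) − 4μ/3 − λ > 0 such that the
auxiliary function f(ε₀,ε₁,r) = μ²ε₁(1−ε₀)(r−1)/(3(r²(μ+λ)/(4(r−1)) − 4μ/3 − λ))
+ μ(r−1) − (r−2)²(μ+λ)/4 is positive. -/
theorem exists_good_parameters (μ lam : ℝ) (hμ : 0 < μ)
    (h1 : 5 * μ / 3 < lam) (h2 : lam < 29 * μ / 3) :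
    ∃ r ε₀ ε₁ : ℝ, 3 < r ∧ r < 7 / 2 ∧ 0 < ε₀ ∧ ε₀ < 1 ∧ 0 < ε₁ ∧ ε₁ < 1 ∧
      r ^ 2 * (μ + lam) / (4 * (r - 1)) - 4 * μ / 3 - lam > 0 ∧
      μ ^ 2 * ε₁ * (1 - ε₀) * (r - 1)
          / (3 * (r ^ 2 * (μ + lam) / (4 * (r - 1)) - 4 * μ / 3 - lam))
        + μ * (r - 1) - (r - 2) ^ 2 * (μ + lam) / 4 > 0 := by
  obtain ⟨e, hedef⟩ : ∃ e : ℝ, e = (29 * μ / 3 - lam) / (100 * μ) := ⟨_, rfl⟩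
  have hμ' : (100 : ℝ) * μ > 0 := by linarith
  have he : 0 < e := hedef ▸ div_pos (by linarith) hμ'
  have he8 : e < 2 / 25 := by
    rw [hedef, div_lt_iff₀ hμ']; linarith
  have hlam : lam = 29 * μ / 3 - 100 * μ * e := by
    rw [hedef]; field_simp; ring
  have hN : (0 : ℝ) < 8 - 80 * e - 568 / 3 * e ^ 2 - 100 * e ^ 3 := by
    nlinarith [mul_pos he he, mul_pos (mul_pos he he) he]
  have h2e : (0 : ℝ) < 2 + e := by linarith
  have hden : (4 : ℝ) * (3 + e - 1) ≠ 0 := ne_of_gt (by linarith)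
  have hD : (3 + e) ^ 2 * (μ + lam) / (4 * (3 + e - 1)) - 4 * μ / 3 - lam
      = μ * (8 - 80 * e - 568 / 3 * e ^ 2 - 100 * e ^ 3) / (4 * (2 + e)) := by
    rw [hlam, show (3 : ℝ) + e - 1 = 2 + e by ring]; have h2e0 : (2 : ℝ) + e ≠ 0 := ne_of_gt h2e; field_simp; ring
  have hDpos : (3 + e) ^ 2 * (μ + lam) / (4 * (3 + e - 1)) - 4 * μ / 3 - lam > 0 := by
    rw [hD]
    exact div_pos (mul_pos hμ hN) (by positivity)
  refine ⟨3 + e, e, 1 - e, by linarith, by linarith, he, by linarith, by linarith,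
    by linarith, hDpos, ?_⟩
  have hQ : (0 : ℝ) < 2560 * e - 41488 / 3 * e ^ 2 - 267488 / 3 * e ^ 3
      - 468976 / 3 * e ^ 4 - 113600 * e ^ 5 - 30000 * e ^ 6 := by
    nlinarith [mul_pos he he, mul_pos (mul_pos he he) he,
      mul_pos (mul_pos (mul_pos he he) he) he,
      mul_pos (mul_pos (mul_pos (mul_pos he he) he) he) he,
      mul_pos (mul_pos (mul_pos (mul_pos (mul_pos he he) he) he) he) he]
  have hf : μ ^ 2 * (1 - e) * (1 - e) * (3 + e - 1)
        / (3 * ((3 + e) ^ 2 * (μ + lam) / (4 * (3 + e - 1)) - 4 * μ / 3 - lam))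
      + μ * (3 + e - 1) - (3 + e - 2) ^ 2 * (μ + lam) / 4
      = μ * (2560 * e - 41488 / 3 * e ^ 2 - 267488 / 3 * e ^ 3
          - 468976 / 3 * e ^ 4 - 113600 * e ^ 5 - 30000 * e ^ 6)
        / (12 * (8 - 80 * e - 568 / 3 * e ^ 2 - 100 * e ^ 3)) := by
    rw [hD, hlam]
    have hN' : (8 : ℝ) - 80 * e - 568 / 3 * e ^ 2 - 100 * e ^ 3 ≠ 0 := ne_of_gt hN
    have h2e' : (2 : ℝ) + e ≠ 0 := ne_of_gt h2e
    have hμ0 : μ ≠ 0 := ne_of_gt hμ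
    rw [show 3 * (μ * (8 - 80 * e - 568 / 3 * e ^ 2 - 100 * e ^ 3) / (4 * (2 + e)))
        = 3 * μ * (8 - 80 * e - 568 / 3 * e ^ 2 - 100 * e ^ 3) / (4 * (2 + e)) by ring,
      div_div_eq_mul_div]
    have h3N : (3:ℝ) * μ * (8 - 80 * e - 568 / 3 * e ^ 2 - 100 * e ^ 3) ≠ 0 := by
      exact mul_ne_zero (mul_ne_zero three_ne_zero hμ0) hN'
    have h12N : (12:ℝ) * (8 - 80 * e - 568 / 3 * e ^ 2 - 100 * e ^ 3) ≠ 0 := by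
      exact mul_ne_zero (by norm_num) hN'
    rw [show μ ^ 2 * (1 - e) * (1 - e) * (3 + e - 1) * (4 * (2 + e))
          / (3 * μ * (8 - 80 * e - 568 / 3 * e ^ 2 - 100 * e ^ 3))
        = μ * (16 * (1 - e) ^ 2 * (2 + e) ^ 2)
          / (12 * (8 - 80 * e - 568 / 3 * e ^ 2 - 100 * e ^ 3)) by
      rw [div_eq_div_iff h3N h12N]; ring]
    rw [div_add' _ _ _ h12N, div_sub_div _ _ h12N (by norm_num : (4:ℝ) ≠ 0),
      div_eq_div_iff (by positivity) h12N]
    ring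
  rw [hf]
  exact div_pos (mul_pos hμ hQ) (by positivity)
end

section
/- Let T > 0, p > 1, γ > 1, and let μ, λ be real numbers with 2μ + λ > 0. Let ρ : ℝ³ × [0,T] → ℝ and u : ℝ³ × [0,T] → ℝ³ be continuously differentiable with ρ ≥ 0, and suppose there is a compact set K ⊂ ℝ³ such that ρ(·,t) vanishes outside K for every t ∈ [0,T]. Assume the continuity equation ∂ₜρ + div(ρu) = 0 holds on ℝ³ × [0,T], and assume div u = (G + ρ^γ)/(2μ+λ) for a continuous function G : ℝ³ × [0,T] → ℝ that is bounded in x for each t. Then the function t ↦ ∫_{ℝ³} ρ(x,t)^p dx is differentiable, equals ∫ρ^p with d/dt ∫_{ℝ³} ρ^p dx = (1−p) ∫_{ℝ³} ρ^p div u dx, and satisfies d/dt ∫_{ℝ³} ρ^p dx ≤ ((p−1)/(2μ+λ)) · sup_{x∈ℝ³} |G(x,t)| · ∫_{ℝ³} ρ^p dx for every t ∈ [0,T]. -/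
open MeasureTheory

noncomputable section

/-- The partial derivative ∂ᵢ g of a scalar function g : ℝ³ → ℝ. -/
def pd (i : Fin 3) (g : E3 → ℝ) (x : E3) : ℝ :=
  fderiv ℝ g x (EuclideanSpace.single i 1)

/-! ### Auxiliary lemmas -/

/-- A time-slice of a jointly `C¹` function is `C¹` in space. -/
lemma aux_sliceCD {F : Type*} [NormedAddCommGroup F] [NormedSpace ℝ F] {T : ℝ} (f : ℝ → E3 → F)
    (hf : ContDiffOn ℝ 1 (fun q : ℝ × E3 => f q.1 q.2) (Set.Icc 0 T ×ˢ Set.univ))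
    {t : ℝ} (ht : t ∈ Set.Icc (0:ℝ) T) : ContDiff ℝ 1 (fun y => f t y) := by
  have h := hf.comp (s := (Set.univ : Set E3)) (f := fun y : E3 => ((t, y) : ℝ × E3))
      ((contDiff_const.prodMk contDiff_id).contDiffOn) (fun y _ => ⟨ht, trivial⟩)
  rwa [contDiffOn_univ] at h

/-- The spatial derivative of a time-slice is given by the joint `fderivWithin`. -/
lemma aux_slice_hasFDerivAt {F : Type*} [NormedAddCommGroup F] [NormedSpace ℝ F] {T : ℝ}
    (f : ℝ → E3 → F)
    (hf : ContDiffOn ℝ 1 (fun q : ℝ × E3 => f q.1 q.2) (Set.Icc 0 T ×ˢ Set.univ))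
    {t : ℝ} (ht : t ∈ Set.Icc (0:ℝ) T) (x : E3) :
    HasFDerivAt (fun y => f t y)
      ((fderivWithin ℝ (fun q : ℝ × E3 => f q.1 q.2) (Set.Icc 0 T ×ˢ Set.univ) (t, x)).comp
        (ContinuousLinearMap.inr ℝ ℝ E3)) x := by
  have hjoint : HasFDerivWithinAt (fun q : ℝ × E3 => f q.1 q.2)
      (fderivWithin ℝ (fun q : ℝ × E3 => f q.1 q.2) (Set.Icc 0 T ×ˢ Set.univ) (t, x))
      (Set.Icc 0 T ×ˢ Set.univ) (t, x) :=
    (hf.differentiableOn one_ne_zero (t, x) ⟨ht, trivial⟩).hasFDerivWithinAt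
  have hι : HasFDerivAt (fun y : E3 => ((t, y) : ℝ × E3)) (ContinuousLinearMap.inr ℝ ℝ E3) x :=
    (hasFDerivAt_const t x).prodMk (hasFDerivAt_id x)
  have h := hjoint.comp x (hι.hasFDerivWithinAt (s := Set.univ)) (fun y _ => ⟨ht, trivial⟩)
  rw [hasFDerivWithinAt_univ] at h
  exact h

/-- Product rule for `pd`. -/
lemma pd_mul (f g : E3 → ℝ) (x : E3) (hf : DifferentiableAt ℝ f x)
    (hg : DifferentiableAt ℝ g x) (i : Fin 3) :
    pd i (fun y => f y * g y) x = pd i f x * g x + f x * pd i g x := by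
  unfold pd
  rw [fderiv_fun_mul hf hg]
  simp only [ContinuousLinearMap.add_apply, ContinuousLinearMap.coe_smul',
    Pi.smul_apply, smul_eq_mul]
  ring

/-- Chain rule for `pd` with a real power. -/
lemma pd_rpow (f : E3 → ℝ) (x : E3) (hf : DifferentiableAt ℝ f x) {p : ℝ} (hp : 1 ≤ p)
    (i : Fin 3) :
    pd i (fun y => f y ^ p) x = p * f x ^ (p - 1) * pd i f x := by
  unfold pd
  have h : HasFDerivAt (fun y => f y ^ p) ((p * f x ^ (p - 1)) • fderiv ℝ f x) x :=
    (Real.hasDerivAt_rpow_const (Or.inr hp)).comp_hasFDerivAt x hf.hasFDerivAt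
  rw [h.fderiv]
  simp [mul_assoc]

/-- The integral over `ℝ³` of a partial derivative of a compactly supported `C¹`
function vanishes. -/
lemma integral_pd_eq_zero (g : E3 → ℝ) (hg : ContDiff ℝ 1 g) (hs : HasCompactSupport g)
    (i : Fin 3) : ∫ x : E3, pd i g x = 0 := by
  have hcont : Continuous fun x => fderiv ℝ g x (EuclideanSpace.single i 1) :=
    (hg.continuous_fderiv one_ne_zero).clm_apply continuous_const
  have hsupp' : HasCompactSupport fun x => fderiv ℝ g x (EuclideanSpace.single i 1) :=
    (hs.fderiv ℝ).comp_left (g := fun L : E3 →L[ℝ] ℝ => L (EuclideanSpace.single i 1)) rfl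
  have h := integral_mul_fderiv_eq_neg_fderiv_mul_of_integrable
    (μ := (volume : Measure E3)) (f := fun _ : E3 => (1:ℝ)) (g := g)
    (v := EuclideanSpace.single i 1)
    (by simpa using (integrable_zero E3 ℝ (volume : Measure E3)))
    (by simpa using hcont.integrable_of_hasCompactSupport hsupp')
    (by simpa using hg.continuous.integrable_of_hasCompactSupport hs)
    (fun x _ => differentiableAt_const (1:ℝ)) (fun x _ => hg.differentiable one_ne_zero x)
  simpa [pd] using h

/-- `a^(p-1) * a = a^p` for nonnegative `a` and `p > 1`. -/
lemma rpow_sub_one_mul {a : ℝ} (ha : 0 ≤ a) {p : ℝ} (hp : 1 < p) :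
    a ^ (p - 1) * a = a ^ p := by
  rcases eq_or_lt_of_le ha with h | h
  · rw [← h, Real.zero_rpow (by linarith : p - 1 ≠ 0), Real.zero_rpow (by linarith : p ≠ 0),
      zero_mul]
  · nth_rewrite 2 [← Real.rpow_one a]
    rw [← Real.rpow_add h]
    norm_num

/-- Evolution of ∫ρ^p under the continuity equation: let T > 0, p > 1, γ > 1 and
2μ + λ > 0.  Let ρ ≥ 0 and u be continuously differentiable on ℝ³ × [0,T], with ρ(·,t)
supported in a fixed compact set K, satisfying the continuity equation
∂ₜρ + div(ρu) = 0, and suppose div u = (G + ρ^γ)/(2μ+λ) for a continuous function G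
bounded in x for each t.  Then t ↦ ∫ρ^p is differentiable with derivative
(1−p)∫ρ^p div u, which is at most ((p−1)/(2μ+λ))·sup_x |G(x,t)|·∫ρ^p. -/
theorem deriv_int_rho_pow (T p γ μ lam : ℝ) (hT : 0 < T) (hp : 1 < p) (hγ : 1 < γ)
    (hvisc : 0 < 2 * μ + lam)
    (ρ : ℝ → E3 → ℝ) (u : ℝ → E3 → E3) (G : ℝ → E3 → ℝ)
    (hρC1 : ContDiffOn ℝ 1 (fun q : ℝ × E3 => ρ q.1 q.2) (Set.Icc 0 T ×ˢ Set.univ))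
    (huC1 : ContDiffOn ℝ 1 (fun q : ℝ × E3 => u q.1 q.2) (Set.Icc 0 T ×ˢ Set.univ))
    (hρnonneg : ∀ t ∈ Set.Icc (0:ℝ) T, ∀ x : E3, 0 ≤ ρ t x)
    (K : Set E3) (hK : IsCompact K)
    (hsupp : ∀ t ∈ Set.Icc (0:ℝ) T, ∀ x : E3, x ∉ K → ρ t x = 0)
    (hcontinuity : ∀ t ∈ Set.Icc (0:ℝ) T, ∀ x : E3,
      HasDerivWithinAt (fun s => ρ s x)
        (-(∑ i, pd i (fun y => ρ t y * u t y i) x)) (Set.Icc 0 T) t)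
    (hdiv : ∀ t ∈ Set.Icc (0:ℝ) T, ∀ x : E3,
      (∑ i, pd i (fun y => u t y i) x) = (G t x + ρ t x ^ γ) / (2 * μ + lam))
    (hGcont : ContinuousOn (fun q : ℝ × E3 => G q.1 q.2) (Set.Icc 0 T ×ˢ Set.univ))
    (hGbdd : ∀ t ∈ Set.Icc (0:ℝ) T, ∃ M : ℝ, ∀ x : E3, |G t x| ≤ M) :
    ∀ t ∈ Set.Icc (0:ℝ) T,
      HasDerivWithinAt (fun s => ∫ x : E3, ρ s x ^ p)
        ((1 - p) * ∫ x : E3, ρ t x ^ p * ∑ i, pd i (fun y => u t y i) x)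
        (Set.Icc 0 T) t
      ∧ (1 - p) * (∫ x : E3, ρ t x ^ p * ∑ i, pd i (fun y => u t y i) x)
          ≤ ((p - 1) / (2 * μ + lam)) * (⨆ x : E3, |G t x|) * ∫ x : E3, ρ t x ^ p := by
  intro t ht
  have hp0 : (0:ℝ) < p := by linarith
  -- spatial slices are C¹
  have ρcd : ∀ s ∈ Set.Icc (0:ℝ) T, ContDiff ℝ 1 (fun y => ρ s y) :=
    fun s hs => aux_sliceCD ρ hρC1 hs
  have ucd : ∀ s ∈ Set.Icc (0:ℝ) T, ContDiff ℝ 1 (fun y => u s y) :=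
    fun s hs => aux_sliceCD u huC1 hs
  have uicd : ∀ s ∈ Set.Icc (0:ℝ) T, ∀ i : Fin 3, ContDiff ℝ 1 (fun y => u s y i) := by
    intro s hs i
    have h := (EuclideanSpace.proj (𝕜 := ℝ) i).contDiff.comp (ucd s hs)
    exact h
  have Pcd : ∀ s ∈ Set.Icc (0:ℝ) T, ContDiff ℝ 1 (fun y => ρ s y ^ p) := by
    intro s hs
    have h1 : ContDiff ℝ (1:ℕ) (fun x : ℝ => x ^ p) :=
      Real.contDiff_rpow_const_of_le (by exact_mod_cast hp.le)
    have h1' : ContDiff ℝ 1 (fun x : ℝ => x ^ p) := by exact_mod_cast h1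
    exact h1'.comp (ρcd s hs)
  have Psupp : ∀ s ∈ Set.Icc (0:ℝ) T, HasCompactSupport (fun y => ρ s y ^ p) := by
    intro s hs
    exact HasCompactSupport.intro hK fun x hx => by
      rw [hsupp s hs x hx]; exact Real.zero_rpow (by linarith)
  have Pint : ∀ s ∈ Set.Icc (0:ℝ) T, Integrable (fun y : E3 => ρ s y ^ p) :=
    fun s hs => ((Pcd s hs).continuous).integrable_of_hasCompactSupport (Psupp s hs)
  -- pointwise time derivative of ρ^p
  set D : ℝ → E3 → ℝ := fun s x =>
    (-(∑ i, pd i (fun y => ρ s y * u s y i) x)) * p * ρ s x ^ (p - 1) with hDdef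
  have hD : ∀ s ∈ Set.Icc (0:ℝ) T, ∀ x : E3,
      HasDerivWithinAt (fun τ => ρ τ x ^ p) (D s x) (Set.Icc 0 T) s :=
    fun s hs x => (hcontinuity s hs x).rpow_const (Or.inr hp.le)
  -- joint continuity of D on [0,T] × ℝ³ and a bound on [0,T] × K
  have hWud : UniqueDiffOn ℝ ((Set.Icc (0:ℝ) T) ×ˢ (Set.univ : Set E3)) :=
    (uniqueDiffOn_Icc hT).prod uniqueDiffOn_univ
  set Fρ := fderivWithin ℝ (fun q : ℝ × E3 => ρ q.1 q.2) (Set.Icc 0 T ×ˢ Set.univ) with hFρdef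
  set Fu := fderivWithin ℝ (fun q : ℝ × E3 => u q.1 q.2) (Set.Icc 0 T ×ˢ Set.univ) with hFudef
  have hFρc : ContinuousOn Fρ (Set.Icc 0 T ×ˢ Set.univ) :=
    hρC1.continuousOn_fderivWithin hWud le_rfl
  have hFuc : ContinuousOn Fu (Set.Icc 0 T ×ˢ Set.univ) :=
    huC1.continuousOn_fderivWithin hWud le_rfl
  have pdρ_eq : ∀ s ∈ Set.Icc (0:ℝ) T, ∀ (x : E3) (i : Fin 3),
      pd i (fun y => ρ s y) x = Fρ (s, x) (0, EuclideanSpace.single i 1) := by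
    intro s hs x i
    unfold pd
    rw [(aux_slice_hasFDerivAt ρ hρC1 hs x).fderiv]
    simp
    rfl
  have pdui_eq : ∀ s ∈ Set.Icc (0:ℝ) T, ∀ (x : E3) (i : Fin 3),
      pd i (fun y => u s y i) x = (Fu (s, x) (0, EuclideanSpace.single i 1)) i := by
    intro s hs x i
    unfold pd
    have h : HasFDerivAt (fun y => u s y i)
        ((EuclideanSpace.proj (𝕜 := ℝ) i).comp
          ((Fu (s, x)).comp (ContinuousLinearMap.inr ℝ ℝ E3))) x := by
      have h0 := (EuclideanSpace.proj (𝕜 := ℝ) i).hasFDerivAt.comp x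
        (aux_slice_hasFDerivAt u huC1 hs x)
      exact h0
    rw [h.fderiv]
    simp
  have pdmul_eq : ∀ s ∈ Set.Icc (0:ℝ) T, ∀ (x : E3) (i : Fin 3),
      pd i (fun y => ρ s y * u s y i) x
        = Fρ (s, x) (0, EuclideanSpace.single i 1) * u s x i
          + ρ s x * (Fu (s, x) (0, EuclideanSpace.single i 1)) i := by
    intro s hs x i
    rw [pd_mul _ _ x ((ρcd s hs).differentiable one_ne_zero x)
      ((uicd s hs i).differentiable one_ne_zero x) i, pdρ_eq s hs x i, pdui_eq s hs x i]
  set Φ : ℝ × E3 → ℝ := fun q =>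
    (-(∑ i, (Fρ q (0, EuclideanSpace.single i 1) * u q.1 q.2 i
        + ρ q.1 q.2 * (Fu q (0, EuclideanSpace.single i 1)) i))) * p
      * ρ q.1 q.2 ^ (p - 1) with hΦdef
  have hΦeq : ∀ s ∈ Set.Icc (0:ℝ) T, ∀ x : E3, D s x = Φ (s, x) := by
    intro s hs x
    simp only [hDdef, hΦdef]
    rw [Finset.sum_congr rfl fun i _ => pdmul_eq s hs x i]
  have hΦc : ContinuousOn Φ (Set.Icc 0 T ×ˢ Set.univ) := by
    have hρc : ContinuousOn (fun q : ℝ × E3 => ρ q.1 q.2) (Set.Icc 0 T ×ˢ Set.univ) :=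
      hρC1.continuousOn
    have huc : ContinuousOn (fun q : ℝ × E3 => u q.1 q.2) (Set.Icc 0 T ×ˢ Set.univ) :=
      huC1.continuousOn
    refine ContinuousOn.mul (ContinuousOn.mul ?_ continuousOn_const) ?_
    · refine ContinuousOn.neg ?_
      refine continuousOn_finset_sum _ fun i _ => ?_
      refine ContinuousOn.add ?_ ?_
      · exact (hFρc.clm_apply continuousOn_const).mul
          ((EuclideanSpace.proj i).continuous.comp_continuousOn huc)
      · exact hρc.mul
          ((EuclideanSpace.proj i).continuous.comp_continuousOn
            (hFuc.clm_apply continuousOn_const))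
    · exact hρc.rpow_const fun q _ => Or.inr (by linarith)
  obtain ⟨C, hC⟩ := (isCompact_Icc.prod hK).exists_bound_of_continuousOn
    (hΦc.mono (fun q hq => ⟨hq.1, trivial⟩))
  set C' := max C 0 with hC'def
  have hC'0 : 0 ≤ C' := le_max_right _ _
  have hDb : ∀ s ∈ Set.Icc (0:ℝ) T, ∀ x ∈ K, ‖D s x‖ ≤ C' := by
    intro s hs x hx
    rw [hΦeq s hs x]
    exact le_trans (hC (s, x) ⟨hs, hx⟩) (le_max_left _ _)
  have hρz : ∀ s ∈ Set.Icc (0:ℝ) T, ∀ x ∉ K, ρ s x ^ p = 0 := by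
    intro s hs x hx
    rw [hsupp s hs x hx]; exact Real.zero_rpow (by linarith)
  -- Lipschitz-type bound on K
  have hlipK : ∀ x ∈ K, ∀ s ∈ Set.Icc (0:ℝ) T,
      ‖ρ s x ^ p - ρ t x ^ p‖ ≤ C' * ‖s - t‖ := by
    intro x hx s hs
    exact (convex_Icc (0:ℝ) T).norm_image_sub_le_of_norm_hasDerivWithin_le
      (fun τ hτ => hD τ hτ x) (fun τ hτ => hDb τ hτ x hx) ht hs
  -- dominated convergence for the slope
  have key1 : HasDerivWithinAt (fun s => ∫ x : E3, ρ s x ^ p) (∫ x : E3, D t x)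
      (Set.Icc 0 T) t := by
    rw [hasDerivWithinAt_iff_tendsto_slope]
    have hmem : ∀ᶠ s in nhdsWithin t (Set.Icc 0 T \ {t}), s ∈ Set.Icc (0:ℝ) T \ {t} :=
      eventually_mem_nhdsWithin
    have H := tendsto_integral_filter_of_dominated_convergence
      (μ := (volume : Measure E3)) (l := nhdsWithin t (Set.Icc 0 T \ {t}))
      (F := fun s x => slope (fun τ => ρ τ x ^ p) t s) (f := fun x => D t x)
      (Set.indicator K fun _ => C')
      (hmem.mono (fun s hs => by
        have hc : Continuous fun x : E3 => slope (fun τ => ρ τ x ^ p) t s := by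
          simp only [slope_def_field]
          exact (((Pcd s hs.1).continuous).sub ((Pcd t ht).continuous)).div_const _
        exact hc.aestronglyMeasurable))
      (hmem.mono (fun s hs => ae_of_all _ fun x => by
        simp only [slope_def_field]
        by_cases hx : x ∈ K
        · rw [Set.indicator_of_mem hx, norm_div]
          rw [div_le_iff₀ (norm_sub_pos_iff.mpr (by simpa using hs.2))]
          exact hlipK x hx s hs.1
        · rw [Set.indicator_of_notMem hx, hρz s hs.1 x hx, hρz t ht x hx]
          simp))
      (by
        rw [integrable_indicator_iff hK.measurableSet]
        exact integrableOn_const hK.measure_lt_top.ne)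
      (ae_of_all _ fun x => hasDerivWithinAt_iff_tendsto_slope.mp (hD t ht x))
    refine H.congr' ?_
    filter_upwards [hmem] with s hs
    simp only [slope_def_field]
    rw [integral_div, integral_sub (Pint s hs.1) (Pint t ht)]
  -- identify the derivative via integration by parts
  have hptwise : ∀ x : E3, D t x
      = -(∑ i, pd i (fun y => ρ t y ^ p * u t y i) x)
        + (1 - p) * (ρ t x ^ p * ∑ i, pd i (fun y => u t y i) x) := by
    intro x
    have hρd : DifferentiableAt ℝ (fun y => ρ t y) x := (ρcd t ht).differentiable one_ne_zero x
    have hPd : DifferentiableAt ℝ (fun y => ρ t y ^ p) x := (Pcd t ht).differentiable one_ne_zero x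
    have hud : ∀ i : Fin 3, DifferentiableAt ℝ (fun y => u t y i) x :=
      fun i => (uicd t ht i).differentiable one_ne_zero x
    have e1 : ∀ i : Fin 3, pd i (fun y => ρ t y * u t y i) x
        = pd i (fun y => ρ t y) x * u t x i + ρ t x * pd i (fun y => u t y i) x :=
      fun i => pd_mul _ _ x hρd (hud i) i
    have e2 : ∀ i : Fin 3, pd i (fun y => ρ t y ^ p * u t y i) x
        = (p * ρ t x ^ (p - 1)) * (pd i (fun y => ρ t y) x * u t x i)
          + ρ t x ^ p * pd i (fun y => u t y i) x := by
      intro i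
      rw [pd_mul _ _ x hPd (hud i) i, pd_rpow _ x hρd hp.le i]
      ring
    simp only [hDdef]
    rw [Finset.sum_congr rfl fun i _ => e1 i, Finset.sum_congr rfl fun i _ => e2 i,
      Finset.sum_add_distrib, Finset.sum_add_distrib, ← Finset.mul_sum, ← Finset.mul_sum,
      ← Finset.mul_sum]
    have hR : ρ t x ^ (p - 1) * ρ t x = ρ t x ^ p := rpow_sub_one_mul (hρnonneg t ht x) hp
    rw [← hR]
    ring
  -- integrability of the divergence terms
  have divcd : ∀ i : Fin 3, ContDiff ℝ 1 (fun y => ρ t y ^ p * u t y i) :=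
    fun i => (Pcd t ht).mul (uicd t ht i)
  have divsupp : ∀ i : Fin 3, HasCompactSupport (fun y => ρ t y ^ p * u t y i) := by
    intro i
    exact HasCompactSupport.intro hK fun x hx => by rw [hρz t ht x hx, zero_mul]
  have divint : ∀ i : Fin 3, Integrable (fun x : E3 => pd i (fun y => ρ t y ^ p * u t y i) x) := by
    intro i
    have hcont : Continuous fun x : E3 =>
        fderiv ℝ (fun y => ρ t y ^ p * u t y i) x (EuclideanSpace.single i 1) :=
      ((divcd i).continuous_fderiv one_ne_zero).clm_apply continuous_const
    have hsupp' : HasCompactSupport fun x : E3 =>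
        fderiv ℝ (fun y => ρ t y ^ p * u t y i) x (EuclideanSpace.single i 1) :=
      (((divsupp i).fderiv ℝ)).comp_left
        (g := fun L : E3 →L[ℝ] ℝ => L (EuclideanSpace.single i 1)) rfl
    exact hcont.integrable_of_hasCompactSupport hsupp'
  have divzero : ∫ x : E3, (∑ i, pd i (fun y => ρ t y ^ p * u t y i) x) = 0 := by
    rw [integral_finset_sum _ (fun i _ => divint i)]
    exact Finset.sum_eq_zero fun i _ => integral_pd_eq_zero _ (divcd i) (divsupp i) i
  -- integrability of ρ^p · div u
  have hGt : Continuous (fun x : E3 => G t x) := by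
    have h := hGcont.comp (s := (Set.univ : Set E3))
      (f := fun y : E3 => ((t, y) : ℝ × E3))
      ((continuous_const.prodMk continuous_id).continuousOn) (fun y _ => ⟨ht, trivial⟩)
    rw [continuousOn_univ] at h
    exact h
  have hdivu_cont : Continuous (fun x : E3 => (G t x + ρ t x ^ γ) / (2 * μ + lam)) := by
    have hργ : Continuous (fun x : E3 => ρ t x ^ γ) :=
      ((ρcd t ht).continuous).rpow_const fun x => Or.inr (by linarith)
    exact (hGt.add hργ).div_const _
  have hfeq : (fun x : E3 => ρ t x ^ p * ∑ i, pd i (fun y => u t y i) x)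
      = fun x : E3 => ρ t x ^ p * ((G t x + ρ t x ^ γ) / (2 * μ + lam)) :=
    funext fun x => by rw [hdiv t ht x]
  have hInt2 : Integrable (fun x : E3 => ρ t x ^ p * ((G t x + ρ t x ^ γ) / (2 * μ + lam))) :=
    (((Pcd t ht).continuous).mul hdivu_cont).integrable_of_hasCompactSupport
      ((Psupp t ht).mul_right)
  have hIntdivu : Integrable (fun x : E3 => ρ t x ^ p * ∑ i, pd i (fun y => u t y i) x) := by
    rw [hfeq]; exact hInt2
  have hDint_eq : ∫ x : E3, D t x
      = (1 - p) * ∫ x : E3, ρ t x ^ p * ∑ i, pd i (fun y => u t y i) x := by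
    have h : (fun x : E3 => D t x)
        = fun x : E3 => (-(∑ i, pd i (fun y => ρ t y ^ p * u t y i) x))
          + (1 - p) * (ρ t x ^ p * ∑ i, pd i (fun y => u t y i) x) := funext hptwise
    have hint1 : Integrable (fun x : E3 => -(∑ i, pd i (fun y => ρ t y ^ p * u t y i) x))
        volume := (integrable_finset_sum _ fun i _ => divint i).neg
    rw [h, integral_add hint1 (hIntdivu.const_mul _), integral_neg, divzero, neg_zero,
      zero_add, integral_const_mul]
  constructor
  · rw [← hDint_eq]; exact key1
  -- the inequality
  · have hIeq2 : ∫ x : E3, ρ t x ^ p * ∑ i, pd i (fun y => u t y i) x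
        = (∫ x : E3, ρ t x ^ p * (G t x + ρ t x ^ γ)) / (2 * μ + lam) := by
      rw [hfeq, ← integral_div]
      simp_rw [mul_div_assoc]
    obtain ⟨M, hM⟩ := hGbdd t ht
    have hbdd : BddAbove (Set.range fun x : E3 => |G t x|) :=
      ⟨M, by rintro _ ⟨x, rfl⟩; exact hM x⟩
    have hle : ∀ x : E3, |G t x| ≤ ⨆ x : E3, |G t x| := fun x => le_ciSup hbdd x
    have hS0 : 0 ≤ ⨆ x : E3, |G t x| := le_trans (abs_nonneg _) (hle 0)
    have hIntGsum : Integrable (fun x : E3 => ρ t x ^ p * (G t x + ρ t x ^ γ)) := by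
      have hργ : Continuous (fun x : E3 => ρ t x ^ γ) :=
        ((ρcd t ht).continuous).rpow_const fun x => Or.inr (by linarith)
      exact (((Pcd t ht).continuous).mul (hGt.add hργ)).integrable_of_hasCompactSupport
        ((Psupp t ht).mul_right)
    have key2 : -(∫ x : E3, ρ t x ^ p * (G t x + ρ t x ^ γ))
        ≤ (⨆ x : E3, |G t x|) * ∫ x : E3, ρ t x ^ p := by
      rw [← integral_neg, ← integral_const_mul]
      refine integral_mono hIntGsum.neg ((Pint t ht).const_mul _) fun x => ?_
      have h1 : 0 ≤ ρ t x ^ p := Real.rpow_nonneg (hρnonneg t ht x) p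
      have h2 : 0 ≤ ρ t x ^ γ := Real.rpow_nonneg (hρnonneg t ht x) γ
      have h3 : -(G t x) ≤ ⨆ x : E3, |G t x| := (neg_le_abs _).trans (hle x)
      simp only [Pi.neg_apply]
      nlinarith [mul_nonneg h1 h2, mul_le_mul_of_nonneg_left h3 h1]
    rw [hIeq2]
    have h5 : (1 - p) * ((∫ x : E3, ρ t x ^ p * (G t x + ρ t x ^ γ)) / (2 * μ + lam))
        = ((p - 1) * (-(∫ x : E3, ρ t x ^ p * (G t x + ρ t x ^ γ)))) / (2 * μ + lam) := by
      ring
    have h6 : ((p - 1) / (2 * μ + lam)) * (⨆ x : E3, |G t x|) * ∫ x : E3, ρ t x ^ p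
        = ((p - 1) * ((⨆ x : E3, |G t x|) * ∫ x : E3, ρ t x ^ p)) / (2 * μ + lam) := by
      ring
    rw [h5, h6]
    exact (div_le_div_iff_of_pos_right hvisc).mpr (mul_le_mul_of_nonneg_left key2 (by linarith))
end
end
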